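/- Identify (Z/2Z)^X (X a finite set) with the Boolean ring (P(X), △, ∩). Let A_0,...,A_{n-1} be independent subsets of X (every Boolean combination ∩ (A_i)^{δ_i} with δ_i ∈ {0,1} is nonempty, together with A_n in the case stated), let H_n be the subgroup of (P(X), △) generated by A_0,...,A_{n-1}, and suppose A_0,...,A_{n-1} are independent. Then A_0 ∪ ⋯ ∪ A_{n-1} is not a sum (symmetric difference) of n−1 elements of the set P(X)·H_n = {Y ∩ h : Y ⊆ X, h ∈ H_n}, but it is a sum of n such elements. -/
import Mathlib


open Pointwise

/-- Identifying (Z/2Z)^X with (P(X), △, ∩) via indicators: if A₀,…,A_{n−1} are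
independent subsets of the finite set X and Hₙ is the subgroup of (P(X),△) they
generate, then A₀ ∪ ⋯ ∪ A_{n−1} is not a sum of n−1 elements of P(X)·Hₙ, but it
is a sum of n such elements. -/
theorem stmt_17 {X : Type*} [Fintype X] (n : ℕ) (hn : 0 < n) (A : Fin n → Set X)
    (hind : ∀ δ : Fin n → Bool,
      (⋂ i, if δ i then A i else (A i)ᶜ).Nonempty) :
    let e : Set X → (X → ZMod 2) := fun S => S.indicator 1
    let Hn : AddSubgroup (X → ZMod 2) :=
      AddSubgroup.closure (Set.range fun i => e (A i))
    (¬ ∃ f : Fin (n - 1) → (X → ZMod 2),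
        (∀ i, f i ∈ Set.univ * (Hn : Set (X → ZMod 2))) ∧
        ∑ i, f i = e (⋃ i, A i)) ∧
    (∃ f : Fin n → (X → ZMod 2),
        (∀ i, f i ∈ Set.univ * (Hn : Set (X → ZMod 2))) ∧
        ∑ i, f i = e (⋃ i, A i)) := by
  classical
  intro e Hn
  have e_apply : ∀ (S : Set X) (x : X), e S x = if x ∈ S then 1 else 0 := by
    intro S x; simp [e, Set.indicator]
  have e_mul : ∀ S T : Set X, e S * e T = e (S ∩ T) := by
    intro S T; funext x
    by_cases hS : x ∈ S <;> by_cases hT : x ∈ T <;>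
      simp [e_apply, hS, hT, Set.mem_inter_iff]
  have h01 : ∀ a : ZMod 2, a = 0 ∨ a = 1 := by decide
  constructor
  · -- negative part
    rintro ⟨f, hf, hsum⟩
    have hHn : (Hn : Set (X → ZMod 2)) ⊆
        (Submodule.span (ZMod 2) (Set.range fun i => e (A i)) : Set (X → ZMod 2)) := by
      intro z hz
      refine AddSubgroup.closure_le
        (Submodule.span (ZMod 2) (Set.range fun i => e (A i))).toAddSubgroup |>.mpr
        ?_ hz
      exact Submodule.subset_span
    choose y hy h hh hyh using fun i => (Set.mem_mul.mp (hf i))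
    choose c hc using fun i =>
      (Submodule.mem_span_range_iff_exists_fun (ZMod 2)).mp (hHn (hh i))
    -- the linear map given by the matrix c has nontrivial kernel
    have hnotinj : ¬ Function.Injective
        ((Matrix.of fun i j => (c i) j).mulVecLin) := by
      intro hinj
      have := LinearMap.finrank_le_finrank_of_injective hinj
      simp [Module.finrank_pi] at this
      omega
    rw [Function.not_injective_iff] at hnotinj
    obtain ⟨a, b, hab, hne⟩ := hnotinj
    set δ : Fin n → ZMod 2 := a - b with hδ
    have hδ0 : δ ≠ 0 := sub_ne_zero_of_ne hne
    have hMδ : ∀ i, ∑ j, c i j * δ j = 0 := by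
      intro i
      have h2 : (Matrix.of fun i j => (c i) j).mulVecLin δ = 0 := by
        rw [hδ, map_sub, hab, sub_self]
      have := congrFun h2 i
      simpa [Matrix.mulVecLin_apply, Matrix.mulVec, dotProduct] using this
    -- pick a point in the atom corresponding to δ
    obtain ⟨x, hx⟩ := hind (fun j => δ j = 1)
    simp only [Set.mem_iInter] at hx
    have hAx : ∀ j, e (A j) x = δ j := by
      intro j
      have hj := hx j
      rcases h01 (δ j) with h0 | h1
      · rw [h0]
        simp only [h0] at hj
        norm_num at hj
        rw [e_apply, if_neg hj]
      · rw [h1]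
        simp only [h1] at hj
        norm_num at hj
        rw [e_apply, if_pos hj]
    have hxU : x ∈ ⋃ i, A i := by
      obtain ⟨j, hj⟩ : ∃ j, δ j ≠ 0 := by
        by_contra hcon; push_neg at hcon; exact hδ0 (funext hcon)
      have hj1 : δ j = 1 := (h01 (δ j)).resolve_left hj
      have : e (A j) x = 1 := by rw [hAx j, hj1]
      rw [e_apply] at this
      by_cases hxA : x ∈ A j
      · exact Set.mem_iUnion.mpr ⟨j, hxA⟩
      · rw [if_neg hxA] at this; exact absurd this (by decide)
    have hone : e (⋃ i, A i) x = 1 := by rw [e_apply, if_pos hxU]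
    have hzero : (∑ i, f i) x = 0 := by
      rw [Finset.sum_apply]
      apply Finset.sum_eq_zero
      intro i _
      have hix : h i x = 0 := by
        have hcx := congrFun (hc i) x
        rw [Finset.sum_apply] at hcx
        simp only [Pi.smul_apply, smul_eq_mul] at hcx
        rw [← hcx]
        calc ∑ j, c i j * e (A j) x = ∑ j, c i j * δ j :=
              Finset.sum_congr rfl fun j _ => by rw [hAx j]
          _ = 0 := hMδ i
      rw [← hyh i, Pi.mul_apply, hix, mul_zero]
    rw [hsum, hone] at hzero
    exact absurd hzero (by decide)
  · -- positive part
    refine ⟨fun i => e {x | ∀ j, j < i → x ∉ A j} * e (A i), ?_, ?_⟩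
    · intro i
      exact Set.mem_mul.mpr ⟨e {x | ∀ j, j < i → x ∉ A j}, Set.mem_univ _,
        e (A i), AddSubgroup.subset_closure ⟨i, rfl⟩, rfl⟩
    · funext x
      rw [Finset.sum_apply]
      by_cases hx : ∃ i, x ∈ A i
      · have hne : (Finset.univ.filter fun i => x ∈ A i).Nonempty := by
          obtain ⟨i, hi⟩ := hx
          exact ⟨i, by simp [hi]⟩
        set i0 := (Finset.univ.filter fun i => x ∈ A i).min' hne with hi0
        have hi0A : x ∈ A i0 := by
          have := (Finset.univ.filter fun i => x ∈ A i).min'_mem hne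
          simpa using this
        have hi0min : ∀ j, j < i0 → x ∉ A j := by
          intro j hj hjA
          exact absurd (Finset.min'_le _ j (by simp [hjA])) (not_le.mpr hj)
        have hterm : ∀ i, (e {x | ∀ j, j < i → x ∉ A j} * e (A i)) x
            = if i = i0 then 1 else 0 := by
          intro i
          rw [e_mul, e_apply]
          by_cases hii : i = i0
          · subst hii
            have hmem : x ∈ {x | ∀ j, j < i0 → x ∉ A j} ∩ A i0 := ⟨hi0min, hi0A⟩
            rw [if_pos hmem, if_pos rfl]
          · rcases lt_or_gt_of_ne hii with hlt | hgt
            · have hxi : x ∉ A i := fun hxi =>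
                absurd (Finset.min'_le _ i (by simp [hxi])) (not_le.mpr hlt)
              have hmem : x ∉ {x | ∀ j, j < i → x ∉ A j} ∩ A i :=
                fun hmem => hxi hmem.2
              rw [if_neg hmem, if_neg hii]
            · have hmem : x ∉ {x | ∀ j, j < i → x ∉ A j} ∩ A i :=
                fun hmem => hmem.1 i0 hgt hi0A
              rw [if_neg hmem, if_neg hii]
        rw [Finset.sum_congr rfl (fun i _ => hterm i), e_apply,
          if_pos (Set.mem_iUnion.mpr hx)]
        simp
      · push_neg at hx
        have : ∀ i ∈ Finset.univ, (e {x | ∀ j, j < i → x ∉ A j} * e (A i)) x = 0 := by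
          intro i _
          rw [e_mul, e_apply]
          exact if_neg (fun hmem => hx i hmem.2)
        rw [Finset.sum_eq_zero this, e_apply]
        simp [Set.mem_iUnion, hx]
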